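/- arXiv:2512.05228 — 3 statements merged into one kernel-verified Lean document; each statement's English description precedes it below -/
import Mathlib

section
/- Let k be a commutative unital ring, I a finite set, and consider the Laurent polynomial ring L = k[x_i^{±1} : i ∈ I]. For any c ∈ k and any nonzero vector m ∈ ℤ^I, the element 1 + c·x^m (where x^m denotes the Laurent monomial ∏_i x_i^{m_i}) is a regular element of L, i.e., not a zero divisor. -/
/-- For a commutative unital ring `k`, a finite set `I`, and the Laurent
polynomial ring `L = k[x_i^{±1} : i ∈ I]` (modelled as the group algebra of `ℤ^I` over `k`),
for any `c ∈ k` and any nonzero `m ∈ ℤ^I`, the element `1 + c·x^m` is a regular element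
of `L`, i.e. not a zero divisor. -/
theorem stmt0 {k : Type*} [CommRing k] {I : Type*} [Fintype I]
    (c : k) (m : I → ℤ) (hm : m ≠ 0) :
    IsRegular ((1 : AddMonoidAlgebra k (I → ℤ)) + AddMonoidAlgebra.single m c) := by
  set u : AddMonoidAlgebra k (I → ℤ) :=
    (1 : AddMonoidAlgebra k (I → ℤ)) + AddMonoidAlgebra.single m c with hu
  have key : ∀ f : AddMonoidAlgebra k (I → ℤ), u * f = 0 → f = 0 := by
    intro f hf
    by_contra hne
    obtain ⟨i, hi⟩ := Function.ne_iff.mp hm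
    have hi : m i ≠ 0 := by simpa using hi
    set e : ℤ := if 0 < m i then 1 else -1 with he_def
    have he : 0 < e * m i := by
      by_cases h : 0 < m i
      · simp only [he_def, if_pos h, one_mul]; exact h
      · simp only [he_def, if_neg h, neg_one_mul]; omega
    have hsupp : f.coeff.support.Nonempty := Finsupp.support_nonempty_iff.mpr (by simpa using hne)
    set S := f.coeff.support.image (fun a => e * a i) with hS_def
    have hS : S.Nonempty := hsupp.image _
    obtain ⟨a, ha, hat⟩ := Finset.mem_image.mp (S.min'_mem hS)
    have hmin : ∀ b ∈ f.coeff.support, S.min' hS ≤ e * b i := fun b hb =>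
      Finset.min'_le _ _ (Finset.mem_image_of_mem _ hb)
    have hnot : f.coeff (-m + a) = 0 := by
      rw [← Finsupp.notMem_support_iff]
      intro hmem
      have h1 := hmin _ hmem
      have h2 : e * ((-m + a) i) = e * a i - e * m i := by
        simp [Pi.add_apply, Pi.neg_apply, mul_add]; ring
      rw [h2, hat] at h1
      linarith
    have hcoeff : f.coeff a + c * f.coeff (-m + a) = 0 := by
      have h0 := congrArg (fun g : AddMonoidAlgebra k (I → ℤ) => g.coeff a) hf
      simp only [hu, add_mul, one_mul, AddMonoidAlgebra.coeff_zero, Finsupp.coe_zero, Pi.zero_apply] at h0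
      rw [AddMonoidAlgebra.coeff_add, Finsupp.add_apply, AddMonoidAlgebra.coeff_single_mul_apply] at h0
      exact h0
    rw [hnot, mul_zero, add_zero] at hcoeff
    exact Finsupp.mem_support_iff.mp ha hcoeff
  have hl : IsLeftRegular u := by
    intro x y hxy
    have : u * (x - y) = 0 := by
      simp only at hxy
      rw [mul_sub, hxy, sub_self]
    exact sub_eq_zero.mp (key _ this)
  exact ⟨hl, fun x y hxy => hl (by simpa only [mul_comm] using hxy)⟩
end

section
/- Localization intersection in a commutative domain: let R be a commutative integral domain with fraction field K, let (p_j)_{j∈J} be a family of prime elements of R, and let S ⊆ R be a multiplicative subset such that no p_j divides any element of S. Then, inside K, the intersection of the localization R[p_j^{-1} : j ∈ J] (localization at the multiplicative set generated by all p_j) and the localization S^{-1}R equals R. -/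
/-- Localization intersection in a commutative domain. Let `R` be a commutative
integral domain with fraction field `K`, `(p_j)_{j∈J}` a family of prime elements of `R`,
and `S ⊆ R` a multiplicative subset such that no `p_j` divides any element of `S`. Then,
inside `K`, the intersection of the localization `R[p_j^{-1} : j ∈ J]` (localization at the
multiplicative set generated by the `p_j`) and the localization `S^{-1}R` equals `R`. -/
theorem stmt7 {R : Type*} [CommRing R] [IsDomain R]
    {J : Type*} (p : J → R) (hp : ∀ j, Prime (p j))
    (S : Submonoid R) (hS : ∀ s ∈ S, ∀ j, ¬ p j ∣ s) :
    {x : FractionRing R |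
        (∃ r : R, ∃ t ∈ Submonoid.closure (Set.range p),
          algebraMap R (FractionRing R) t * x = algebraMap R (FractionRing R) r) ∧
        (∃ r : R, ∃ s ∈ S,
          algebraMap R (FractionRing R) s * x = algebraMap R (FractionRing R) r)} =
      Set.range (algebraMap R (FractionRing R)) := by
  have hinj : Function.Injective (algebraMap R (FractionRing R)) :=
    IsFractionRing.injective R (FractionRing R)
  ext x
  simp only [Set.mem_setOf_eq, Set.mem_range]
  constructor
  · rintro ⟨⟨r, t, ht, hrt⟩, ⟨r', s, hs, hrs⟩⟩
    have key : t ≠ 0 ∧ ∀ r : R, t ∣ s * r → t ∣ r := by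
      clear hrt
      induction ht using Submonoid.closure_induction with
      | mem a ha =>
        obtain ⟨j, rfl⟩ := ha
        exact ⟨(hp j).ne_zero, fun r hdvd =>
          ((hp j).2.2 s r hdvd).resolve_left (hS s hs j)⟩
      | one => exact ⟨one_ne_zero, fun r _ => one_dvd r⟩
      | mul a b _ _ ha hb =>
        refine ⟨mul_ne_zero ha.1 hb.1, fun r hdvd => ?_⟩
        obtain ⟨c, rfl⟩ := ha.2 r ((dvd_mul_right a b).trans hdvd)
        have hb' : b ∣ s * c := by
          rcases hdvd with ⟨d, hd⟩
          refine ⟨d, mul_left_cancel₀ ha.1 ?_⟩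
          linear_combination hd
        obtain ⟨e, rfl⟩ := hb.2 c hb'
        exact ⟨e, by ring⟩
    have heq : t * r' = s * r := by
      apply hinj
      rw [map_mul, map_mul, ← hrs, ← hrt]
      ring
    obtain ⟨c, hc⟩ := key.2 r ⟨r', heq.symm⟩
    refine ⟨c, ?_⟩
    have ht0 : algebraMap R (FractionRing R) t ≠ 0 := fun h =>
      key.1 (hinj (by rw [h, map_zero]))
    apply mul_left_cancel₀ ht0
    rw [hrt, hc, map_mul]
  · rintro ⟨r, rfl⟩
    exact ⟨⟨r, 1, one_mem _, by simp⟩, ⟨r, 1, one_mem _, by simp⟩⟩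
end

section
/- Existence of a maximal nonzero decomposition of a root: let Φ be the root system of a complex simple Lie algebra with highest root θ, and set W = Φ ∪ {0} (the set of weights of the adjoint representation). For β ∈ Φ with β ≠ θ and β ≠ -θ, define Ψ(β) = {(β₁, β₂) ∈ W × W : β₁ + β₂ = β}. Then there exists (β₁°, β₂°) ∈ Ψ(β) such that (i) for every (β₁, β₂) ∈ Ψ(β) with (β₁, β₂) ≠ (β₁°, β₂°), β₁° is not ≤ β₁ in the dominance order, and (ii) β₁° ≠ 0 and β₂° ≠ 0. -/
open scoped RealInnerProductSpace

/-- A (finite, crystallographic, reduced) root system in a real inner product space `V`: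
a finite set `Φ` of nonzero vectors spanning `V`, stable under the associated reflections,
with integral Cartan numbers, and such that the only multiples of a root `α` that are roots
are `±α`. -/
structure RootSystemData (V : Type*) [NormedAddCommGroup V] [InnerProductSpace ℝ V] where
  Φ : Finset V
  zero_not_mem : (0 : V) ∉ Φ
  spanning : Submodule.span ℝ (Φ : Set V) = ⊤
  reflect_mem : ∀ α ∈ Φ, ∀ β ∈ Φ, β - (2 * ⟪α, β⟫ / ⟪α, α⟫) • α ∈ Φ
  crystallographic : ∀ α ∈ Φ, ∀ β ∈ Φ, ∃ n : ℤ, (n : ℝ) = 2 * ⟪α, β⟫ / ⟪α, α⟫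
  reduced : ∀ α ∈ Φ, ∀ t : ℝ, t • α ∈ Φ → t = 1 ∨ t = -1

variable {V : Type*} [NormedAddCommGroup V] [InnerProductSpace ℝ V]

/-- `Φ` is irreducible: nonempty and not a disjoint union of two nonempty mutually
orthogonal subsets. -/
def RootSystemData.IsIrreducible (R : RootSystemData V) : Prop :=
  R.Φ.Nonempty ∧
    ∀ S ⊆ R.Φ, (∀ α ∈ S, ∀ β ∈ R.Φ, β ∉ S → ⟪α, β⟫ = 0) → S = ∅ ∨ S = R.Φ

/-- `Pi` is a base (set of simple roots) of the root system: a linearly independent subset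
of `Φ` such that every root is a nonnegative integral or nonpositive integral combination
of elements of `Pi`. -/
def RootSystemData.IsBase (R : RootSystemData V) (Pi : Finset V) : Prop :=
  (Pi : Set V) ⊆ (R.Φ : Set V) ∧
    LinearIndependent ℝ (fun a : Pi => (a : V)) ∧
    ∀ β ∈ R.Φ,
      (∃ c : V → ℕ, β = ∑ α ∈ Pi, (c α : ℝ) • α) ∨
      (∃ c : V → ℕ, β = -(∑ α ∈ Pi, (c α : ℝ) • α))

/-- `β` is a positive root with respect to the base `Pi`. -/
def RootSystemData.IsPositive (R : RootSystemData V) (Pi : Finset V) (β : V) : Prop :=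
  β ∈ R.Φ ∧ ∃ c : V → ℕ, β = ∑ α ∈ Pi, (c α : ℝ) • α

/-- `θ` is the highest root with respect to the base `Pi`: a root such that `θ - β` is a
nonnegative integral combination of simple roots for every root `β`. -/
def RootSystemData.IsHighest (R : RootSystemData V) (Pi : Finset V) (θ : V) : Prop :=
  θ ∈ R.Φ ∧ ∀ β ∈ R.Φ, ∃ c : V → ℕ, θ - β = ∑ α ∈ Pi, (c α : ℝ) • α

private lemma rsd_neg_mem (R : RootSystemData V) {a : V} (ha : a ∈ R.Φ) : -a ∈ R.Φ := by
  have h0 : a ≠ 0 := fun h => R.zero_not_mem (h ▸ ha)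
  have haa : ⟪a, a⟫ ≠ 0 := by
    rw [real_inner_self_eq_norm_sq]
    exact pow_ne_zero 2 (norm_ne_zero_iff.mpr h0)
  have hmem := R.reflect_mem a ha a ha
  have h2 : 2 * ⟪a, a⟫ / ⟪a, a⟫ = 2 := by field_simp
  rw [h2] at hmem
  have he : a - (2 : ℝ) • a = -a := by rw [two_smul]; abel
  rwa [he] at hmem

private lemma rsd_inner_self_pos (R : RootSystemData V) {a : V} (ha : a ∈ R.Φ) :
    0 < ⟪a, a⟫ := by
  have h0 : a ≠ 0 := fun h => R.zero_not_mem (h ▸ ha)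
  rw [real_inner_self_eq_norm_sq]
  exact pow_pos (norm_pos_iff.mpr h0) 2

private lemma coeff_eq {Pi : Finset V}
    (hli : LinearIndependent ℝ (fun a : Pi => (a : V)))
    (c d : V → ℝ) (h : ∑ α ∈ Pi, c α • α = ∑ α ∈ Pi, d α • α) :
    ∀ α ∈ Pi, c α = d α := by
  intro α hα
  have h0 : ∑ a ∈ Pi.attach, (fun x : Pi => c x - d x) a • ((a : Pi) : V) = 0 := by
    simp only [sub_smul]
    rw [Finset.sum_sub_distrib, Finset.sum_attach Pi (fun x => c x • x),
      Finset.sum_attach Pi (fun x => d x • x), h, sub_self]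
  have := linearIndependent_iff'.mp hli Pi.attach (fun x : Pi => c x - d x) h0
    ⟨α, hα⟩ (Finset.mem_attach _ _)
  simpa [sub_eq_zero] using this

private lemma coeff_zero {Pi : Finset V}
    (hli : LinearIndependent ℝ (fun a : Pi => (a : V)))
    (e : V → ℝ) (h : ∑ x ∈ Pi, e x • x = 0) : ∀ α ∈ Pi, e α = 0 := by
  intro α hα
  have := coeff_eq hli e (fun _ => 0) (by simpa using h) α hα
  simpa using this

open scoped Classical in
private lemma simple_indicator {Pi : Finset V} {α : V} (hα : α ∈ Pi) :
    ∑ x ∈ Pi, (if x = α then (1 : ℝ) else 0) • x = α := by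
  simp only [ite_smul, one_smul, zero_smul]
  rw [Finset.sum_ite_eq' Pi α (fun x => x), if_pos hα]

private lemma no_simple_zero {Pi : Finset V}
    (hli : LinearIndependent ℝ (fun a : Pi => (a : V))) {α : V} (hα : α ∈ Pi)
    (c : V → ℕ) (h : (∑ x ∈ Pi, (c x : ℝ) • x) + α = 0) : False := by
  classical
  have h0 : ∑ x ∈ Pi, ((c x : ℝ) + if x = α then 1 else 0) • x = 0 := by
    simp only [add_smul]
    rw [Finset.sum_add_distrib, simple_indicator hα]
    exact h
  have := coeff_zero hli _ h0 α hα
  have h2 : (c α : ℝ) + 1 = 0 := by simpa using this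
  have h1 : (0 : ℝ) ≤ (c α : ℝ) := Nat.cast_nonneg _
  linarith

private lemma natcomb_add (Pi : Finset V) (c d : V → ℕ) :
    (∑ x ∈ Pi, (c x : ℝ) • x) + (∑ x ∈ Pi, (d x : ℝ) • x)
      = ∑ x ∈ Pi, ((c x + d x : ℕ) : ℝ) • x := by
  rw [← Finset.sum_add_distrib]
  refine Finset.sum_congr rfl fun x _ => ?_
  push_cast
  rw [add_smul]

private lemma comb_simple_aux (R : RootSystemData V) {Pi : Finset V}
    (hli : LinearIndependent ℝ (fun a : Pi => (a : V))) {α : V} (hα : α ∈ Pi)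
    (c e : V → ℕ)
    (h : (∑ x ∈ Pi, (c x : ℝ) • x) + (∑ x ∈ Pi, (e x : ℝ) • x) = α)
    {γ : V} (hγ : γ = ∑ x ∈ Pi, (c x : ℝ) • x) (hγΦ : γ ∈ R.Φ) (hγPi : γ ∉ Pi) :
    False := by
  classical
  have hcoef : ∀ x ∈ Pi, (c x : ℝ) + (e x : ℝ) = if x = α then 1 else 0 := by
    refine coeff_eq hli (fun x => (c x : ℝ) + (e x : ℝ))
      (fun x => if x = α then 1 else 0) ?_
    simp only [add_smul]
    rw [Finset.sum_add_distrib, simple_indicator hα, h]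
  have hcα := hcoef α hα
  rw [if_pos rfl] at hcα
  have hnat : c α + e α = 1 := by exact_mod_cast hcα
  have hγα : γ = (c α : ℝ) • α := by
    rw [hγ, Finset.sum_eq_single_of_mem α hα]
    intro x hx hxα
    have h2 := hcoef x hx
    rw [if_neg hxα] at h2
    have h3 : (c x : ℝ) = 0 := by
      have h4 : (0 : ℝ) ≤ (c x : ℝ) := Nat.cast_nonneg _
      have h5 : (0 : ℝ) ≤ (e x : ℝ) := Nat.cast_nonneg _
      linarith
    rw [h3, zero_smul]
  have : c α = 0 ∨ c α = 1 := by omega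
  rcases this with h6 | h6
  · rw [h6] at hγα
    simp only [Nat.cast_zero, zero_smul] at hγα
    exact R.zero_not_mem (hγα ▸ hγΦ)
  · rw [h6] at hγα
    simp only [Nat.cast_one, one_smul] at hγα
    exact hγPi (hγα ▸ hα)

private lemma rsd_add_mem (R : RootSystemData V) {a b : V} (ha : a ∈ R.Φ) (hb : b ∈ R.Φ)
    (hip : ⟪a, b⟫ < 0) (hne : b ≠ -a) : a + b ∈ R.Φ := by
  obtain ⟨n, hn⟩ := R.crystallographic a ha b hb
  obtain ⟨m, hm⟩ := R.crystallographic b hb a ha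
  have haa : 0 < ⟪a, a⟫ := rsd_inner_self_pos R ha
  have hbb : 0 < ⟪b, b⟫ := rsd_inner_self_pos R hb
  have hba : ⟪b, a⟫ = ⟪a, b⟫ := real_inner_comm a b
  have hnneg : (n : ℝ) < 0 := by
    rw [hn]
    exact div_neg_of_neg_of_pos (by linarith) haa
  have hmneg : (m : ℝ) < 0 := by
    rw [hm, hba]
    exact div_neg_of_neg_of_pos (by linarith) hbb
  have hn1 : n ≤ -1 := by
    have : n < 0 := by exact_mod_cast hnneg
    omega
  have hm1 : m ≤ -1 := by
    have : m < 0 := by exact_mod_cast hmneg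
    omega
  have hcs : ⟪a, b⟫ * ⟪a, b⟫ ≤ ⟪a, a⟫ * ⟪b, b⟫ := real_inner_mul_inner_self_le a b
  have hprod : (n : ℝ) * (m : ℝ) ≤ 4 := by
    rw [hn, hm, hba, div_mul_div_comm]
    rw [div_le_iff₀ (by positivity)]
    nlinarith
  have hprodZ : n * m ≤ 4 := by exact_mod_cast hprod
  by_cases h1 : n = -1
  · have hmem := R.reflect_mem a ha b hb
    rw [← hn, h1] at hmem
    have he : b - ((-1 : ℤ) : ℝ) • a = a + b := by push_cast; rw [neg_smul, one_smul]; abel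
    rwa [he] at hmem
  by_cases h2 : m = -1
  · have hmem := R.reflect_mem b hb a ha
    rw [← hm, h2] at hmem
    have he : a - ((-1 : ℤ) : ℝ) • b = a + b := by push_cast; rw [neg_smul, one_smul]; abel
    rwa [he] at hmem
  exfalso
  have hn2l : n = -2 := by
    by_contra hc
    have h3 : n ≤ -3 := by omega
    have h4 : m ≤ -2 := by omega
    nlinarith
  have hm2l : m = -2 := by
    by_contra hc
    have h3 : m ≤ -3 := by omega
    have h4 : n ≤ -2 := by omega
    nlinarith
  have hn2 : n = -2 ∧ m = -2 := ⟨hn2l, hm2l⟩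
  have hab1 : 2 * ⟪a, b⟫ = -2 * ⟪a, a⟫ := by
    have := hn
    rw [hn2.1] at this
    push_cast at this
    field_simp at this
    linarith
  have hab2 : 2 * ⟪a, b⟫ = -2 * ⟪b, b⟫ := by
    have := hm
    rw [hn2.2] at this
    push_cast at this
    rw [hba] at this
    field_simp at this
    linarith
  have hzero : ⟪a + b, a + b⟫ = 0 := by
    rw [real_inner_add_add_self]
    linarith
  have h7 : ‖a + b‖ ^ 2 = 0 := by rw [← real_inner_self_eq_norm_sq]; exact hzero
  have h8 : a + b = 0 := norm_eq_zero.mp ((pow_eq_zero_iff two_ne_zero).mp h7)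
  have h9 : b + a = 0 := by rw [add_comm]; exact h8
  exact hne (eq_neg_of_add_eq_zero_left h9)

private lemma exists_f (R : RootSystemData V) (Pi : Finset V) (hPi : R.IsBase Pi) :
    ∃ f : V →ₗ[ℝ] ℝ, ∀ α ∈ Pi, f α = 1 := by
  classical
  have hsub : (R.Φ : Set V) ⊆ (Submodule.span ℝ (Pi : Set V) : Set V) := by
    intro x hx
    rcases hPi.2.2 x (by exact_mod_cast hx) with ⟨c, hc⟩ | ⟨c, hc⟩
    · rw [hc]
      exact Submodule.sum_mem _ fun α hαPi =>
        Submodule.smul_mem _ _ (Submodule.subset_span (Finset.mem_coe.mpr hαPi))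
    · rw [hc]
      exact Submodule.neg_mem _ (Submodule.sum_mem _ fun α hαPi =>
        Submodule.smul_mem _ _ (Submodule.subset_span (Finset.mem_coe.mpr hαPi)))
  have hspan' : Submodule.span ℝ (Pi : Set V) = ⊤ := by
    rw [eq_top_iff, ← R.spanning]
    exact Submodule.span_le.mpr hsub
  have hrange : Set.range (fun a : Pi => (a : V)) = (Pi : Set V) := by
    ext x; simp
  have htop : ⊤ ≤ Submodule.span ℝ (Set.range (fun a : Pi => (a : V))) := by
    rw [hrange, hspan']
  let B : Module.Basis Pi ℝ V := Module.Basis.mk hPi.2.1 htop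
  refine ⟨B.sumCoords, fun α hα => ?_⟩
  have hB : B ⟨α, hα⟩ = α := Module.Basis.mk_apply hPi.2.1 htop ⟨α, hα⟩
  rw [← hB, Module.Basis.sumCoords_self_apply]

private lemma f_natcomb {Pi : Finset V} (f : V →ₗ[ℝ] ℝ) (hf1 : ∀ α ∈ Pi, f α = 1)
    (c : V → ℕ) : f (∑ x ∈ Pi, (c x : ℝ) • x) = ∑ x ∈ Pi, (c x : ℝ) := by
  rw [map_sum]
  exact Finset.sum_congr rfl fun x hx => by rw [map_smul, hf1 x hx, smul_eq_mul, mul_one]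

private lemma inner_nonneg_of_no_add (R : RootSystemData V) {Pi : Finset V}
    (hPi : R.IsBase Pi) {β : V} (hβΦ : β ∈ R.Φ) (d : V → ℕ)
    (hβd : β = ∑ x ∈ Pi, (d x : ℝ) • x)
    (hnb : ∀ α ∈ Pi, β + α ∉ R.Φ) : ∀ α ∈ Pi, 0 ≤ ⟪β, α⟫ := by
  intro α hα
  by_contra hlt
  push_neg at hlt
  have hαΦ : α ∈ R.Φ := hPi.1 hα
  have hne : β ≠ -α := by
    intro h
    exact no_simple_zero hPi.2.1 hα d (by rw [← hβd, h]; abel)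
  have hmem := rsd_add_mem R hαΦ hβΦ (by rw [real_inner_comm]; exact hlt) hne
  exact hnb α hα (by rwa [add_comm] at hmem)

private lemma chain_down (R : RootSystemData V) {Pi : Finset V} (hPi : R.IsBase Pi)
    (f : V →ₗ[ℝ] ℝ) (hf1 : ∀ α ∈ Pi, f α = 1)
    {β : V} (hβΦ : β ∈ R.Φ) (d : V → ℕ) (hβd : β = ∑ x ∈ Pi, (d x : ℝ) • x)
    (hnb : ∀ α ∈ Pi, β + α ∉ R.Φ) :
    ∀ n : ℕ, ∀ γ ∈ R.Φ, β + γ ∈ R.Φ →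
      ∀ c : V → ℕ, γ = ∑ x ∈ Pi, (c x : ℝ) • x → (∑ x ∈ Pi, c x) = n → False := by
  have hli := hPi.2.1
  have hβα := inner_nonneg_of_no_add R hPi hβΦ d hβd hnb
  intro n
  induction n using Nat.strong_induction_on with
  | _ n ih =>
    intro γ hγΦ hβγΦ c hγc hcn
    by_cases hγPi : γ ∈ Pi
    · exact hnb γ hγPi hβγΦ
    have hγ0 : γ ≠ 0 := fun h => R.zero_not_mem (h ▸ hγΦ)
    have hex : ∃ α ∈ Pi, 0 < ⟪α, γ⟫ := by
      by_contra hno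
      push_neg at hno
      have h1 : ⟪γ, γ⟫ ≤ 0 := by
        nth_rewrite 1 [hγc]
        rw [sum_inner]
        refine Finset.sum_nonpos fun x hx => ?_
        rw [real_inner_smul_left]
        exact mul_nonpos_of_nonneg_of_nonpos (Nat.cast_nonneg _) (hno x hx)
      exact absurd h1 (not_le.mpr (rsd_inner_self_pos R hγΦ))
    obtain ⟨α, hαPi, hαγ⟩ := hex
    have hαΦ : α ∈ R.Φ := hPi.1 hαPi
    have hγα : γ ≠ α := fun h => hγPi (h ▸ hαPi)
    have hmαΦ : -α ∈ R.Φ := rsd_neg_mem R hαΦ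
    have hγmα : γ + -α ∈ R.Φ := by
      refine rsd_add_mem R hγΦ hmαΦ ?_ ?_
      · rw [inner_neg_right]
        have := real_inner_comm α γ
        linarith
      · intro h
        exact hγα (neg_injective h).symm
    have hsubΦ : γ - α ∈ R.Φ := by rwa [← sub_eq_add_neg] at hγmα
    have hβγα : β + γ ≠ α := by
      intro h
      refine comb_simple_aux R hli hαPi c d ?_ hγc hγΦ hγPi
      rw [← hγc, ← hβd, add_comm]
      exact h
    have hadd : β + (γ - α) ∈ R.Φ := by
      have hmem := rsd_add_mem R hβγΦ hmαΦ ?_ ?_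
      · have h5 : β + γ + -α = β + (γ - α) := by abel
        rwa [h5] at hmem
      · rw [inner_neg_right, inner_add_left]
        have h6 := hβα α hαPi
        have h7 := real_inner_comm α γ
        linarith
      · intro h
        exact hβγα (neg_injective h).symm
    obtain ⟨c', hc'⟩ : ∃ c' : V → ℕ, γ - α = ∑ x ∈ Pi, (c' x : ℝ) • x := by
      rcases hPi.2.2 (γ - α) hsubΦ with h | ⟨e, he⟩
      · exact h
      · exfalso
        refine comb_simple_aux R hli hαPi c e ?_ hγc hγΦ hγPi
        have h2 : γ = -(∑ x ∈ Pi, (e x : ℝ) • x) + α := by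
          rw [← he]; abel
        rw [← hγc, h2]; abel
    have hn1 : (1 : ℝ) ≤ (n : ℝ) := by
      rcases Nat.eq_zero_or_pos n with h0 | hpos
      · exfalso
        apply hγ0
        rw [hγc]
        refine Finset.sum_eq_zero fun x hx => ?_
        have hcx : c x = 0 := by
          rw [h0] at hcn
          exact (Finset.sum_eq_zero_iff).mp hcn x hx
        rw [hcx]; simp
      · exact_mod_cast hpos
    have hkey : ((∑ x ∈ Pi, c' x : ℕ) : ℝ) = (n : ℝ) - 1 := by
      push_cast
      rw [← f_natcomb f hf1 c', ← hc', map_sub, hf1 α hαPi, hγc, f_natcomb f hf1 c]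
      rw [← hcn]
      push_cast
      ring
    have hlt : (∑ x ∈ Pi, c' x) < n := by
      have h8 : ((∑ x ∈ Pi, c' x : ℕ) : ℝ) < (n : ℝ) := by rw [hkey]; linarith
      exact_mod_cast h8
    exact ih _ hlt (γ - α) hsubΦ hadd c' hc' rfl

private lemma exists_simple_add (R : RootSystemData V) {Pi : Finset V} (hPi : R.IsBase Pi)
    {θ : V} (hθ : R.IsHighest Pi θ)
    {β : V} (hβΦ : β ∈ R.Φ) (d : V → ℕ) (hβd : β = ∑ x ∈ Pi, (d x : ℝ) • x)
    (hβθ : β ≠ θ) : ∃ α ∈ Pi, β + α ∈ R.Φ := by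
  by_contra hno
  push_neg at hno
  obtain ⟨f, hf1⟩ := exists_f R Pi hPi
  have hβα := inner_nonneg_of_no_add R hPi hβΦ d hβd hno
  obtain ⟨c, hc⟩ := hθ.2 β hβΦ
  have hβθpos : 0 < ⟪β, θ⟫ := by
    have h1 : ⟪β, θ⟫ = ⟪β, β⟫ + ⟪β, θ - β⟫ := by
      rw [← inner_add_right]
      congr 1
      abel
    have h2 : 0 ≤ ⟪β, θ - β⟫ := by
      rw [hc, inner_sum]
      refine Finset.sum_nonneg fun x hx => ?_
      rw [real_inner_smul_right]
      exact mul_nonneg (Nat.cast_nonneg _) (hβα x hx)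
    have h3 := rsd_inner_self_pos R hβΦ
    rw [h1]
    linarith
  have hmθΦ : -θ ∈ R.Φ := rsd_neg_mem R hθ.1
  have hβmθ : β + -θ ∈ R.Φ := by
    refine rsd_add_mem R hβΦ hmθΦ ?_ ?_
    · rw [inner_neg_right]; linarith
    · intro h
      exact hβθ (neg_injective h).symm
  have hγΦ : θ - β ∈ R.Φ := by
    have hmem := rsd_neg_mem R hβmθ
    have he : -(β + -θ) = θ - β := by abel
    rwa [he] at hmem
  have hβγ : β + (θ - β) ∈ R.Φ := by
    rw [add_sub_cancel]
    exact hθ.1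
  exact chain_down R hPi f hf1 hβΦ d hβd hno (∑ x ∈ Pi, c x) (θ - β) hγΦ hβγ c hc rfl

private lemma assemble (R : RootSystemData V) {Pi : Finset V}
    (hli : LinearIndependent ℝ (fun a : Pi => (a : V)))
    (f : V →ₗ[ℝ] ℝ) (hf1 : ∀ α ∈ Pi, f α = 1) (β p₁ p₂ : V)
    (hp₁ : p₁ ∈ R.Φ) (hp₂ : p₂ ∈ R.Φ) (hsum : p₁ + p₂ = β)
    (K1 : ∀ c : V → ℕ, (∑ x ∈ Pi, (c x : ℝ) • x) + p₁ ≠ 0)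
    (K2 : ∀ c : V → ℕ, β - p₁ ≠ ∑ x ∈ Pi, (c x : ℝ) • x) :
    ∃ β₁ β₂ : V, β₁ ∈ R.Φ ∧ β₂ ∈ R.Φ ∧ β₁ + β₂ = β ∧
      ∀ γ₁ γ₂ : V, (γ₁ = 0 ∨ γ₁ ∈ R.Φ) → (γ₂ = 0 ∨ γ₂ ∈ R.Φ) → γ₁ + γ₂ = β →
        (γ₁, γ₂) ≠ (β₁, β₂) →
        ¬ ∃ c : V → ℕ, γ₁ - β₁ = ∑ α ∈ Pi, (c α : ℝ) • α := by
  classical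
  set W : Finset V := insert 0 R.Φ with hW
  set S : Finset (V × V) := (W ×ˢ W).filter
    (fun p => p.1 + p.2 = β ∧ ∃ c : V → ℕ, p.1 - p₁ = ∑ x ∈ Pi, (c x : ℝ) • x) with hS
  have hmemS : ∀ q₁ q₂ : V, (q₁ = 0 ∨ q₁ ∈ R.Φ) → (q₂ = 0 ∨ q₂ ∈ R.Φ) → q₁ + q₂ = β →
      (∃ c : V → ℕ, q₁ - p₁ = ∑ x ∈ Pi, (c x : ℝ) • x) → (q₁, q₂) ∈ S := by
    intro q₁ q₂ h1 h2 h3 h4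
    refine Finset.mem_filter.mpr ⟨Finset.mem_product.mpr ⟨?_, ?_⟩, h3, h4⟩
    · exact Finset.mem_insert.mpr h1
    · exact Finset.mem_insert.mpr h2
  have hSne : S.Nonempty :=
    ⟨(p₁, p₂), hmemS p₁ p₂ (Or.inr hp₁) (Or.inr hp₂) hsum ⟨fun _ => 0, by simp⟩⟩
  obtain ⟨g, hgS, hgmax⟩ := Finset.exists_max_image S (fun p => f p.1) hSne
  obtain ⟨hgW, hgsum, c₀, hc₀⟩ := Finset.mem_filter.mp hgS
  have hg1W := (Finset.mem_product.mp hgW).1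
  have hg2W := (Finset.mem_product.mp hgW).2
  have hg10 : g.1 ≠ 0 := by
    intro h
    apply K1 c₀
    rw [← hc₀, h, zero_sub]
    abel
  have hg20 : g.2 ≠ 0 := by
    intro h
    have hg1β : g.1 = β := by rw [← hgsum, h, add_zero]
    exact K2 c₀ (by rw [← hg1β]; exact hc₀)
  have hg1Φ : g.1 ∈ R.Φ := ((Finset.mem_insert.mp hg1W).resolve_left hg10)
  have hg2Φ : g.2 ∈ R.Φ := ((Finset.mem_insert.mp hg2W).resolve_left hg20)
  refine ⟨g.1, g.2, hg1Φ, hg2Φ, hgsum, ?_⟩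
  rintro γ₁ γ₂ h1 h2 h3 hne ⟨c, hc⟩
  have hmem : (γ₁, γ₂) ∈ S := by
    refine hmemS γ₁ γ₂ h1 h2 h3 ⟨fun x => c x + c₀ x, ?_⟩
    rw [← natcomb_add Pi c c₀, ← hc, ← hc₀]
    abel
  have hle := hgmax (γ₁, γ₂) hmem
  have hne1 : γ₁ ≠ g.1 := by
    intro h
    apply hne
    have h3' := h3
    rw [h] at h3'
    have hg2 : γ₂ = g.2 := add_left_cancel (h3'.trans hgsum.symm)
    rw [Prod.ext_iff]
    exact ⟨h, hg2⟩
  have hsum0 : 0 ≤ ∑ x ∈ Pi, (c x : ℝ) :=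
    Finset.sum_nonneg fun x _ => Nat.cast_nonneg (c x)
  have hpos : 0 < ∑ x ∈ Pi, (c x : ℝ) := by
    rcases hsum0.lt_or_eq with hl | he
    · exact hl
    · exfalso
      apply hne1
      have hz : γ₁ - g.1 = 0 := by
        rw [hc]
        refine Finset.sum_eq_zero fun x hx => ?_
        have := (Finset.sum_eq_zero_iff_of_nonneg
          (fun x _ => Nat.cast_nonneg (c x))).mp he.symm x hx
        rw [this, zero_smul]
      exact sub_eq_zero.mp hz
  have hdiff : f γ₁ - f g.1 = ∑ x ∈ Pi, (c x : ℝ) := by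
    rw [← map_sub, hc]
    exact f_natcomb f hf1 c
  simp only at hle
  linarith

/-- Existence of a maximal nonzero decomposition of a root. Let `Φ` be the
root system of a complex simple Lie algebra (an irreducible crystallographic reduced root
system) with base `Pi` and highest root `θ`, and let `W = Φ ∪ {0}` be the set of weights
of the adjoint representation. For every root `β` with `β ≠ θ` and `β ≠ -θ` there exists a
pair `(β₁°, β₂°)` of weights with `β₁° + β₂° = β` such that:
(i) for every pair `(γ₁, γ₂)` of weights with `γ₁ + γ₂ = β` and `(γ₁, γ₂) ≠ (β₁°, β₂°)`,
    `β₁°` is not `≤ γ₁` in the dominance order (`μ ≤ λ` iff `λ - μ` is a nonnegative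
    integral combination of simple roots), and
(ii) `β₁° ≠ 0` and `β₂° ≠ 0` (i.e. both are roots). -/
theorem stmt11 (R : RootSystemData V)
    (hirr : R.IsIrreducible) (Pi : Finset V) (hPi : R.IsBase Pi)
    (θ : V) (hθ : R.IsHighest Pi θ)
    (β : V) (hβ : β ∈ R.Φ) (hβθ : β ≠ θ) (hβθ' : β ≠ -θ) :
    ∃ β₁ β₂ : V, β₁ ∈ R.Φ ∧ β₂ ∈ R.Φ ∧ β₁ + β₂ = β ∧
      ∀ γ₁ γ₂ : V, (γ₁ = 0 ∨ γ₁ ∈ R.Φ) → (γ₂ = 0 ∨ γ₂ ∈ R.Φ) → γ₁ + γ₂ = β →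
        (γ₁, γ₂) ≠ (β₁, β₂) →
        ¬ ∃ c : V → ℕ, γ₁ - β₁ = ∑ α ∈ Pi, (c α : ℝ) • α := by
  classical
  obtain ⟨f, hf1⟩ := exists_f R Pi hPi
  have hli := hPi.2.1
  rcases hPi.2.2 β hβ with ⟨d, hd⟩ | ⟨d, hd⟩
  · -- β positive
    obtain ⟨α, hαPi, hβαΦ⟩ := exists_simple_add R hPi hθ hβ d hd hβθ
    have hαΦ : α ∈ R.Φ := hPi.1 hαPi
    have hmαΦ : -α ∈ R.Φ := rsd_neg_mem R hαΦ
    refine assemble R hli f hf1 β (β + α) (-α) hβαΦ hmαΦ (by abel) ?_ ?_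
    · intro c h
      refine no_simple_zero hli hαPi (fun x => c x + d x) ?_
      rw [← natcomb_add Pi c d]
      rw [hd] at h
      rw [add_assoc]
      calc (∑ x ∈ Pi, (c x : ℝ) • x) + ((∑ x ∈ Pi, (d x : ℝ) • x) + α)
          = (∑ x ∈ Pi, (c x : ℝ) • x) + ((∑ x ∈ Pi, (d x : ℝ) • x) + α) := rfl
        _ = 0 := h
    · intro c h
      refine no_simple_zero hli hαPi c ?_
      rw [← h]
      abel
  · -- β negative
    have hmβΦ : -β ∈ R.Φ := rsd_neg_mem R hβ
    have hmβd : -β = ∑ x ∈ Pi, (d x : ℝ) • x := by rw [hd, neg_neg]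
    have hmβθ : -β ≠ θ := fun h => hβθ' (by rw [← h, neg_neg])
    obtain ⟨α, hαPi, hmβαΦ⟩ := exists_simple_add R hPi hθ hmβΦ d hmβd hmβθ
    have hαΦ : α ∈ R.Φ := hPi.1 hαPi
    have hβαΦ : β - α ∈ R.Φ := by
      have hmem := rsd_neg_mem R hmβαΦ
      have he : -(-β + α) = β - α := by abel
      rwa [he] at hmem
    refine assemble R hli f hf1 β α (β - α) hαΦ hβαΦ (by abel) ?_ ?_
    · intro c h
      exact no_simple_zero hli hαPi c h
    · intro c h
      refine no_simple_zero hli hαPi (fun x => c x + d x) ?_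
      rw [← natcomb_add Pi c d, ← h, hd]
      abel
end
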